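/- For ε ∈ (0, 1) and g̃₁ > max{g₁, 2} define g_ε(s) := (g(s + ε)/(s + ε))·s + ε·(1 + s)^{g̃₁ − 2}·s for s > 0, and set g̃₀ := min{g₀, 2}. Then g_ε satisfies g̃₀ − 1 ≤ s·g_ε′(s)/g_ε(s) ≤ g̃₁ − 1 for every s > 0; in particular the bounds are independent of ε. -/

import Mathlib

/-- The regularized structure function
`g_ε(s) = (g(s+ε)/(s+ε)) s + ε (1+s)^{g̃₁−2} s`. -/
noncomputable def geps (g : ℝ → ℝ) (ε tg₁ : ℝ) (s : ℝ) : ℝ :=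
  g (s + ε) / (s + ε) * s + ε * (1 + s) ^ (tg₁ - 2) * s

/-- Pure arithmetic core of the Orlicz bounds for the regularized function. -/
lemma geps_aux (g₀ g₁ tg₁ ε s u u' P Q D : ℝ)
    (hs : 0 < s) (hε : 0 < ε) (hu : 0 < u) (hQ : 0 < Q)
    (hPQ : P = Q * (1 + s)) (hg₀ : 1 < g₀) (hg₀₁ : g₀ ≤ g₁)
    (htg1 : g₁ < tg₁) (htg2 : 2 < tg₁)
    (hlo : (g₀ - 1) * u ≤ (s + ε) * u') (hhi : (s + ε) * u' ≤ (g₁ - 1) * u)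
    (hD : D = (u' * (s + ε) - u * 1) / (s + ε) ^ 2 * s + u / (s + ε) * 1 +
      (ε * (1 * (tg₁ - 2) * Q) * s + ε * P * 1)) :
    min g₀ 2 - 1 ≤ s * D / (u / (s + ε) * s + ε * P * s) ∧
      s * D / (u / (s + ε) * s + ε * P * s) ≤ tg₁ - 1 := by
  subst hPQ
  subst hD
  have ht : (0:ℝ) < s + ε := by linarith
  have h1s : (0:ℝ) < 1 + s := by linarith
  have hGpos : 0 < u / (s + ε) * s + ε * (Q * (1 + s)) * s := by positivity
  have hm2 : min g₀ 2 ≤ 2 := min_le_right _ _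
  have e1 : s * ((u' * (s + ε) - u * 1) / (s + ε) ^ 2 * s + u / (s + ε) * 1 +
      (ε * (1 * (tg₁ - 2) * Q) * s + ε * (Q * (1 + s)) * 1)) * (s + ε) ^ 2 =
      s ^ 2 * ((s + ε) * u' - u) + s * u * (s + ε) +
      (ε * (tg₁ - 2) * Q * s ^ 2 + ε * (Q * (1 + s)) * s) * (s + ε) ^ 2 := by
    field_simp
  have pA_lb : (min g₀ 2 - 1) * (s * u * (s + ε)) ≤
      s ^ 2 * ((s + ε) * u' - u) + s * u * (s + ε) := by
    rcases le_total g₀ 2 with h | h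
    · rw [min_eq_left h]
      linarith [mul_le_mul_of_nonneg_left hlo (sq_nonneg s),
        mul_nonneg (mul_nonneg hε.le (by linarith : (0:ℝ) ≤ 2 - g₀)) (mul_pos hs hu).le]
    · rw [min_eq_right h]
      linarith [mul_le_mul_of_nonneg_left hlo (sq_nonneg s),
        mul_nonneg (sq_nonneg s) (mul_nonneg (by linarith : (0:ℝ) ≤ g₀ - 2) hu.le)]
  have pA_ub : s ^ 2 * ((s + ε) * u' - u) + s * u * (s + ε) ≤
      (tg₁ - 1) * (s * u * (s + ε)) := by
    rcases le_total g₁ 2 with h | h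
    · linarith [mul_le_mul_of_nonneg_left hhi (sq_nonneg s),
        mul_nonneg (sq_nonneg s) (mul_nonneg (by linarith : (0:ℝ) ≤ 2 - g₁) hu.le),
        mul_nonneg (mul_nonneg (mul_pos hs hu).le ht.le) (by linarith : (0:ℝ) ≤ tg₁ - 2)]
    · linarith [mul_le_mul_of_nonneg_left hhi (sq_nonneg s),
        mul_nonneg (mul_nonneg (mul_nonneg hε.le (by linarith : (0:ℝ) ≤ g₁ - 2)) hs.le) hu.le,
        mul_nonneg (mul_nonneg (mul_pos hs hu).le ht.le) (by linarith : (0:ℝ) ≤ tg₁ - g₁)]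
  have pB_lb : (min g₀ 2 - 1) * (ε * (Q * (1 + s)) * s * (s + ε) ^ 2) ≤
      (ε * (tg₁ - 2) * Q * s ^ 2 + ε * (Q * (1 + s)) * s) * (s + ε) ^ 2 := by
    linarith [mul_nonneg (mul_nonneg (mul_nonneg (mul_nonneg
        (mul_nonneg hε.le hQ.le) h1s.le) hs.le) (sq_nonneg (s + ε)))
        (by linarith : (0:ℝ) ≤ 2 - min g₀ 2),
      mul_nonneg (mul_nonneg (mul_nonneg (mul_nonneg hε.le
        (by linarith : (0:ℝ) ≤ tg₁ - 2)) hQ.le) (sq_nonneg s)) (sq_nonneg (s + ε))]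
  have pB_ub : (ε * (tg₁ - 2) * Q * s ^ 2 + ε * (Q * (1 + s)) * s) * (s + ε) ^ 2 ≤
      (tg₁ - 1) * (ε * (Q * (1 + s)) * s * (s + ε) ^ 2) := by
    linarith [mul_nonneg (mul_nonneg (mul_nonneg (mul_nonneg hε.le hQ.le) hs.le)
      (sq_nonneg (s + ε))) (by linarith : (0:ℝ) ≤ tg₁ - 2)]
  constructor
  · rw [le_div_iff₀ hGpos]
    have key : (min g₀ 2 - 1) * (u / (s + ε) * s + ε * (Q * (1 + s)) * s) * (s + ε) ^ 2 ≤
        s * ((u' * (s + ε) - u * 1) / (s + ε) ^ 2 * s + u / (s + ε) * 1 +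
          (ε * (1 * (tg₁ - 2) * Q) * s + ε * (Q * (1 + s)) * 1)) * (s + ε) ^ 2 := by
      rw [e1, show (min g₀ 2 - 1) * (u / (s + ε) * s + ε * (Q * (1 + s)) * s) * (s + ε) ^ 2 =
        (min g₀ 2 - 1) * (s * u * (s + ε)) +
        (min g₀ 2 - 1) * (ε * (Q * (1 + s)) * s * (s + ε) ^ 2) by field_simp]
      linarith [pA_lb, pB_lb]
    exact le_of_mul_le_mul_right key (by positivity)
  · rw [div_le_iff₀ hGpos]
    have key : s * ((u' * (s + ε) - u * 1) / (s + ε) ^ 2 * s + u / (s + ε) * 1 +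
          (ε * (1 * (tg₁ - 2) * Q) * s + ε * (Q * (1 + s)) * 1)) * (s + ε) ^ 2 ≤
        (tg₁ - 1) * (u / (s + ε) * s + ε * (Q * (1 + s)) * s) * (s + ε) ^ 2 := by
      rw [e1, show (tg₁ - 1) * (u / (s + ε) * s + ε * (Q * (1 + s)) * s) * (s + ε) ^ 2 =
        (tg₁ - 1) * (s * u * (s + ε)) +
        (tg₁ - 1) * (ε * (Q * (1 + s)) * s * (s + ε) ^ 2) by field_simp]
      linarith [pA_ub, pB_ub]
    exact le_of_mul_le_mul_right key (by positivity)

/-- The regularized function `g_ε` satisfies the Orlicz-type condition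
`g̃₀ − 1 ≤ s g_ε'(s)/g_ε(s) ≤ g̃₁ − 1` for every `s > 0`, where `g̃₀ := min{g₀, 2}`;
in particular the bounds are independent of `ε`. -/
theorem stmt_14 (g₀ g₁ : ℝ) (hg₀ : 1 < g₀) (hg₀₁ : g₀ ≤ g₁)
    (g g' : ℝ → ℝ)
    (hg_pos : ∀ s : ℝ, 0 < s → 0 < g s)
    (hg_deriv : ∀ s : ℝ, 0 < s → HasDerivAt g (g' s) s)
    (hg'_cont : ContinuousOn g' (Set.Ioi 0))
    (hg_orlicz : ∀ s : ℝ, 0 < s → g₀ - 1 ≤ s * g' s / g s ∧ s * g' s / g s ≤ g₁ - 1)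
    (ε tg₁ : ℝ) (hε : 0 < ε) (hε1 : ε < 1) (htg₁ : max g₁ 2 < tg₁) :
    ∀ s : ℝ, 0 < s →
      DifferentiableAt ℝ (geps g ε tg₁) s ∧
      min g₀ 2 - 1 ≤ s * deriv (geps g ε tg₁) s / geps g ε tg₁ s ∧
      s * deriv (geps g ε tg₁) s / geps g ε tg₁ s ≤ tg₁ - 1 := by
  intro s hs
  have ht : (0:ℝ) < s + ε := by linarith
  have h1s : (0:ℝ) < 1 + s := by linarith
  have hu : 0 < g (s + ε) := hg_pos _ ht
  have htg1 : g₁ < tg₁ := lt_of_le_of_lt (le_max_left _ _) htg₁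
  have htg2 : (2:ℝ) < tg₁ := lt_of_le_of_lt (le_max_right _ _) htg₁
  have h1 : HasDerivAt (fun x => g (x + ε)) (g' (s + ε)) s := by
    have := (hg_deriv (s + ε) ht).comp s ((hasDerivAt_id s).add_const ε)
    simpa [Function.comp_def] using this
  have h2 : HasDerivAt (fun x : ℝ => x + ε) 1 s := (hasDerivAt_id s).add_const ε
  have hA : HasDerivAt (fun x => g (x + ε) / (x + ε) * x)
      ((g' (s + ε) * (s + ε) - g (s + ε) * 1) / (s + ε) ^ 2 * s + g (s + ε) / (s + ε) * 1) s :=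
    (h1.div h2 ht.ne').mul (hasDerivAt_id s)
  have hP : HasDerivAt (fun x : ℝ => (1 + x) ^ (tg₁ - 2))
      (1 * (tg₁ - 2) * (1 + s) ^ (tg₁ - 2 - 1)) s :=
    ((hasDerivAt_id s).const_add 1).rpow_const (Or.inl h1s.ne')
  have hB : HasDerivAt (fun x : ℝ => ε * (1 + x) ^ (tg₁ - 2) * x)
      (ε * (1 * (tg₁ - 2) * (1 + s) ^ (tg₁ - 2 - 1)) * s + ε * (1 + s) ^ (tg₁ - 2) * 1) s :=
    (hP.const_mul ε).mul (hasDerivAt_id s)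
  have hG : HasDerivAt (geps g ε tg₁)
      ((g' (s + ε) * (s + ε) - g (s + ε) * 1) / (s + ε) ^ 2 * s + g (s + ε) / (s + ε) * 1 +
        (ε * (1 * (tg₁ - 2) * (1 + s) ^ (tg₁ - 2 - 1)) * s + ε * (1 + s) ^ (tg₁ - 2) * 1)) s :=
    hA.add hB
  refine ⟨hG.differentiableAt, ?_⟩
  rw [hG.deriv]
  have hPQ : (1 + s) ^ (tg₁ - 2) = (1 + s) ^ (tg₁ - 2 - 1) * (1 + s) := by
    rw [← Real.rpow_add_one h1s.ne' (tg₁ - 2 - 1)]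
    norm_num
  have horl := hg_orlicz (s + ε) ht
  have hlo : (g₀ - 1) * g (s + ε) ≤ (s + ε) * g' (s + ε) := by
    have := horl.1
    rwa [le_div_iff₀ hu] at this
  have hhi : (s + ε) * g' (s + ε) ≤ (g₁ - 1) * g (s + ε) := by
    have := horl.2
    rwa [div_le_iff₀ hu] at this
  have hGval : geps g ε tg₁ s = g (s + ε) / (s + ε) * s + ε * (1 + s) ^ (tg₁ - 2) * s := rfl
  rw [hGval]
  exact geps_aux g₀ g₁ tg₁ ε s (g (s + ε)) (g' (s + ε))
    ((1 + s) ^ (tg₁ - 2)) ((1 + s) ^ (tg₁ - 2 - 1)) _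
    hs hε hu (Real.rpow_pos_of_pos h1s _) hPQ hg₀ hg₀₁ htg1 htg2 hlo hhi (by ring)
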